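/- Let A and B be real symmetric 2×2 matrices with det(A − B) ≤ 0. Then the closed intervals spanned by their eigenvalues overlap: λ_min(A) ≤ λ_max(B) and λ_min(B) ≤ λ_max(A). In particular, if Rank(A − B) = 1 (so det(A−B) = 0), the eigenvalue intervals of A and B intersect. -/

import Mathlib

open Matrix

lemma rayleigh_lb {n : Type*} [Fintype n] [DecidableEq n]
    {A : Matrix n n ℝ} (hA : A.IsHermitian) (c : ℝ)
    (hc : ∀ i, c ≤ hA.eigenvalues i) (x : n → ℝ) :
    c * (x ⬝ᵥ x) ≤ x ⬝ᵥ (A *ᵥ x) := by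
  set U : Matrix n n ℝ := (hA.eigenvectorUnitary : Matrix n n ℝ) with hUdef
  have hUstar : star U = Uᵀ := by
    ext i j; simp [Matrix.conjTranspose_apply]
  have hU1 : U * Uᵀ = 1 := by
    rw [← hUstar]; exact Matrix.mem_unitaryGroup_iff.mp hA.eigenvectorUnitary.2
  set y : n → ℝ := Uᵀ *ᵥ x with hy
  have key : ∀ z : n → ℝ, x ⬝ᵥ (U *ᵥ z) = y ⬝ᵥ z := by
    intro z
    rw [Matrix.dotProduct_mulVec, hy, ← Matrix.mulVec_transpose]
  have hxx : x ⬝ᵥ x = y ⬝ᵥ y := by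
    have h2 := key y
    rw [hy, Matrix.mulVec_mulVec, hU1, Matrix.one_mulVec] at h2
    exact h2
  have hAx : x ⬝ᵥ (A *ᵥ x) = ∑ i, hA.eigenvalues i * (y i)^2 := by
    conv_lhs => rw [hA.spectral_theorem, Unitary.conjStarAlgAut_apply, hUstar]
    rw [← Matrix.mulVec_mulVec, ← Matrix.mulVec_mulVec, key]
    simp only [Matrix.mulVec_diagonal, dotProduct, Function.comp_apply,
      RCLike.ofReal_real_eq_id, id_eq]
    congr 1; ext i; ring
  rw [hAx, hxx]
  simp only [dotProduct]
  rw [Finset.mul_sum]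
  apply Finset.sum_le_sum
  intro i _
  calc c * (y i * y i) = c * (y i)^2 := by ring
    _ ≤ hA.eigenvalues i * (y i)^2 :=
        mul_le_mul_of_nonneg_right (hc i) (sq_nonneg _)

lemma rayleigh_ub {n : Type*} [Fintype n] [DecidableEq n]
    {A : Matrix n n ℝ} (hA : A.IsHermitian) (c : ℝ)
    (hc : ∀ i, hA.eigenvalues i ≤ c) (x : n → ℝ) :
    x ⬝ᵥ (A *ᵥ x) ≤ c * (x ⬝ᵥ x) := by
  set U : Matrix n n ℝ := (hA.eigenvectorUnitary : Matrix n n ℝ) with hUdef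
  have hUstar : star U = Uᵀ := by
    ext i j; simp [Matrix.conjTranspose_apply]
  have hU1 : U * Uᵀ = 1 := by
    rw [← hUstar]; exact Matrix.mem_unitaryGroup_iff.mp hA.eigenvectorUnitary.2
  set y : n → ℝ := Uᵀ *ᵥ x with hy
  have key : ∀ z : n → ℝ, x ⬝ᵥ (U *ᵥ z) = y ⬝ᵥ z := by
    intro z
    rw [Matrix.dotProduct_mulVec, hy, ← Matrix.mulVec_transpose]
  have hxx : x ⬝ᵥ x = y ⬝ᵥ y := by
    have h2 := key y
    rw [hy, Matrix.mulVec_mulVec, hU1, Matrix.one_mulVec] at h2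
    exact h2
  have hAx : x ⬝ᵥ (A *ᵥ x) = ∑ i, hA.eigenvalues i * (y i)^2 := by
    conv_lhs => rw [hA.spectral_theorem, Unitary.conjStarAlgAut_apply, hUstar]
    rw [← Matrix.mulVec_mulVec, ← Matrix.mulVec_mulVec, key]
    simp only [Matrix.mulVec_diagonal, dotProduct, Function.comp_apply,
      RCLike.ofReal_real_eq_id, id_eq]
    congr 1; ext i; ring
  rw [hAx, hxx]
  simp only [dotProduct]
  rw [Finset.mul_sum]
  apply Finset.sum_le_sum
  intro i _
  calc hA.eigenvalues i * (y i)^2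
      ≤ c * (y i)^2 := mul_le_mul_of_nonneg_right (hc i) (sq_nonneg _)
    _ = c * (y i * y i) := by ring

/-- key step -/
lemma overlap {A B : Matrix (Fin 2) (Fin 2) ℝ}
    (hA : A.IsHermitian) (hB : B.IsHermitian) (hdet : (A - B).det ≤ 0) :
    min (hA.eigenvalues 0) (hA.eigenvalues 1) ≤ max (hB.eigenvalues 0) (hB.eigenvalues 1) := by
  by_contra hlt
  push_neg at hlt
  set a := min (hA.eigenvalues 0) (hA.eigenvalues 1)
  set b := max (hB.eigenvalues 0) (hB.eigenvalues 1)
  have hPD : (A - B).PosDef := by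
    refine Matrix.PosDef.of_dotProduct_mulVec_pos (hA.sub hB) fun x hx => ?_
    have hxx : 0 < x ⬝ᵥ x := by
      have : x ⬝ᵥ x = ∑ i, x i ^ 2 := by
        simp [dotProduct, sq]
      rw [this]
      apply Finset.sum_pos'
      · exact fun i _ => sq_nonneg _
      · obtain ⟨i, hi⟩ := Function.ne_iff.mp hx
        refine ⟨i, Finset.mem_univ i, ?_⟩
        simp only [Pi.zero_apply] at hi
        positivity
    have h1 : a * (x ⬝ᵥ x) ≤ x ⬝ᵥ (A *ᵥ x) := by
      apply rayleigh_lb hA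
      intro i
      fin_cases i
      · exact min_le_left _ _
      · exact min_le_right _ _
    have h2 : x ⬝ᵥ (B *ᵥ x) ≤ b * (x ⬝ᵥ x) := by
      apply rayleigh_ub hB
      intro i
      fin_cases i
      · exact le_max_left _ _
      · exact le_max_right _ _
    have hsub : x ⬝ᵥ ((A - B) *ᵥ x) = x ⬝ᵥ (A *ᵥ x) - x ⬝ᵥ (B *ᵥ x) := by
      rw [Matrix.sub_mulVec, dotProduct_sub]
    have hstar : star x = x := by ext i; simp
    rw [hstar, hsub]
    nlinarith
  exact absurd hPD.det_pos (not_lt.mpr hdet)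

theorem stmt_16 (A B : Matrix (Fin 2) (Fin 2) ℝ)
    (hA : A.IsHermitian) (hB : B.IsHermitian) (hdet : (A - B).det ≤ 0) :
    min (hA.eigenvalues 0) (hA.eigenvalues 1) ≤ max (hB.eigenvalues 0) (hB.eigenvalues 1) ∧
    min (hB.eigenvalues 0) (hB.eigenvalues 1) ≤ max (hA.eigenvalues 0) (hA.eigenvalues 1) := by
  have hdet' : (B - A).det ≤ 0 := by
    rw [← neg_sub A B, Matrix.det_neg]
    simpa using hdet
  exact ⟨overlap hA hB hdet, overlap hB hA hdet'⟩
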